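/- For the planar system ẋ₁ = −λx₁ + x₁(ρ₁x₁ + ρ₂x₂), ẋ₂ = −λx₂ + x₂(ρ₁x₁ + ρ₂x₂) with λ > 0 and ρ₁, ρ₂ ∈ ℝ, the half-plane H = { x ∈ ℝ² : ρ₁x₁ + ρ₂x₂ < λ } is positively invariant and equals the domain of attraction D_a(0) of the origin. -/

import Mathlib

noncomputable section

open Filter

/-- `x` is a solution of the autonomous system `ẋ = f(x)` on `[0, ∞)`. -/
def IsSolOn {E : Type*} [NormedAddCommGroup E] [NormedSpace ℝ E]
    (f : E → E) (x : ℝ → E) : Prop :=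
  ∀ t ∈ Set.Ici (0:ℝ), HasDerivWithinAt x (f (x t)) (Set.Ici 0) t

/-- The domain of attraction of the zero steady state. -/
def domAttr {E : Type*} [NormedAddCommGroup E] [NormedSpace ℝ E]
    (f : E → E) : Set E :=
  {x0 | ∃ x : ℝ → E, x 0 = x0 ∧ IsSolOn f x ∧ Tendsto x atTop (nhds 0)}

open intervalIntegral in
/-- If `g' = u * g` on `[0,∞)` with `u` continuous there, then `g t = g 0 * exp (∫₀ᵗ u)`. -/
lemma grow_formula (u g : ℝ → ℝ)
    (hu : ContinuousOn u (Set.Ici 0))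
    (hg : ∀ t ∈ Set.Ici (0:ℝ), HasDerivWithinAt g (u t * g t) (Set.Ici 0) t) :
    ∀ t ∈ Set.Ici (0:ℝ), g t = g 0 * Real.exp (∫ s in (0:ℝ)..t, u s) := by
  have hgc : ContinuousOn g (Set.Ici 0) := fun t ht => (hg t ht).continuousWithinAt
  intro t ht
  set A : ℝ → ℝ := fun r => ∫ s in (0:ℝ)..r, u s with hA
  have hint : ∀ r ∈ Set.Ici (0:ℝ), IntervalIntegrable u MeasureTheory.volume 0 r := by
    intro r hr
    apply ContinuousOn.intervalIntegrable
    apply hu.mono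
    rw [Set.uIcc_of_le hr]
    exact Set.Icc_subset_Ici_self
  have hA' : ∀ r ∈ Set.Ici (0:ℝ), HasDerivWithinAt A (u r) (Set.Ici r) r := by
    intro r hr
    refine integral_hasDerivWithinAt_right (hint r hr) ?_ ?_
    · exact ((hu.mono (fun y (hy : y ∈ Set.Ioi r) =>
        Set.mem_Ici.2 (le_trans (Set.mem_Ici.1 hr) (Set.mem_Ioi.1 hy).le))).stronglyMeasurableAtFilter_nhdsWithin measurableSet_Ioi r)
    · exact (hu r hr).mono (fun y (hy : y ∈ Set.Ioi r) => Set.mem_Ici.2 (le_trans (Set.mem_Ici.1 hr) (Set.mem_Ioi.1 hy).le))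
  have hAc : ContinuousOn A (Set.Icc 0 t) := by
    have := continuousOn_primitive_interval' (hint t ht) Set.left_mem_uIcc
    rwa [Set.uIcc_of_le ht] at this
  have key : ∀ r ∈ Set.Icc (0:ℝ) t, g r * Real.exp (-A r) = g 0 * Real.exp (-A 0) := by
    apply constant_of_has_deriv_right_zero
    · exact ((hgc.mono (Set.Icc_subset_Ici_self)).mul (hAc.neg.rexp))
    · intro r hr
      have hr0 : r ∈ Set.Ici (0:ℝ) := hr.1
      have h1 : HasDerivWithinAt g (u r * g r) (Set.Ici r) r :=
        (hg r hr0).mono (Set.Ici_subset_Ici.2 hr.1)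
      have h2 := ((hA' r hr0).neg).exp
      have := h1.mul h2
      refine this.congr_deriv ?_
      ring
  have h0 : A 0 = 0 := by simp [hA]
  have ht' := key t (Set.mem_Icc.2 ⟨ht, le_refl t⟩)
  rw [h0] at ht'
  simp only [neg_zero, Real.exp_zero, mul_one] at ht'
  have hgt : g t = g 0 * Real.exp (A t) := by
    rw [← ht', mul_assoc, ← Real.exp_add]
    simp
  simpa [hA] using hgt

section main

variable {lam ρ₁ ρ₂ : ℝ} {f : EuclideanSpace ℝ (Fin 2) → EuclideanSpace ℝ (Fin 2)}

/-- For any solution `x`, the quantity `g t = lam - (ρ₁ x₁ + ρ₂ x₂)` satisfies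
`g t = g 0 * exp(∫ u)`, in particular its sign is preserved. -/
lemma sol_g_formula
    (hf : ∀ x : EuclideanSpace ℝ (Fin 2),
      f x = (WithLp.equiv 2 (Fin 2 → ℝ)).symm
        ![-lam * x 0 + ρ₁ * x 0 ^ 2 + ρ₂ * x 0 * x 1,
          -lam * x 1 + ρ₁ * x 0 * x 1 + ρ₂ * x 1 ^ 2])
    (x : ℝ → EuclideanSpace ℝ (Fin 2)) (hx : IsSolOn f x) :
    ∀ t ∈ Set.Ici (0:ℝ),
      lam - (ρ₁ * x t 0 + ρ₂ * x t 1)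
        = (lam - (ρ₁ * x 0 0 + ρ₂ * x 0 1))
          * Real.exp (∫ s in (0:ℝ)..t, (ρ₁ * x s 0 + ρ₂ * x s 1)) := by
  set u : ℝ → ℝ := fun s => ρ₁ * x s 0 + ρ₂ * x s 1 with hu_def
  have hu' : ∀ t ∈ Set.Ici (0:ℝ),
      HasDerivWithinAt u (ρ₁ * (f (x t) 0) + ρ₂ * (f (x t) 1)) (Set.Ici 0) t := by
    intro t ht
    have h0 : HasDerivWithinAt (fun s => x s 0) (f (x t) 0) (Set.Ici 0) t := by
      have := (EuclideanSpace.proj (0 : Fin 2)).hasFDerivAt.comp_hasDerivWithinAt t (hx t ht)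
      simpa [Function.comp_def] using this
    have h1 : HasDerivWithinAt (fun s => x s 1) (f (x t) 1) (Set.Ici 0) t := by
      have := (EuclideanSpace.proj (1 : Fin 2)).hasFDerivAt.comp_hasDerivWithinAt t (hx t ht)
      simpa [Function.comp_def] using this
    exact (h0.const_mul ρ₁).add (h1.const_mul ρ₂)
  have hucont : ContinuousOn u (Set.Ici 0) := fun t ht => (hu' t ht).continuousWithinAt
  have hg : ∀ t ∈ Set.Ici (0:ℝ),
      HasDerivWithinAt (fun s => lam - u s) (u t * (lam - u t)) (Set.Ici 0) t := by
    intro t ht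
    have := (hu' t ht).const_sub lam
    refine this.congr_deriv ?_
    have e0 : f (x t) 0 = -lam * x t 0 + ρ₁ * x t 0 ^ 2 + ρ₂ * x t 0 * x t 1 := by
      rw [hf]; simp [WithLp.equiv_symm_apply, PiLp.toLp_apply]
    have e1 : f (x t) 1 = -lam * x t 1 + ρ₁ * x t 0 * x t 1 + ρ₂ * x t 1 ^ 2 := by
      rw [hf]; simp [WithLp.equiv_symm_apply, PiLp.toLp_apply]
    rw [e0, e1, hu_def]
    ring
  have := grow_formula u (fun s => lam - u s) hucont hg
  simpa [hu_def] using this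

end main

theorem domain_of_attraction_is_halfplane
    (lam ρ₁ ρ₂ : ℝ) (hlam : 0 < lam)
    (f : EuclideanSpace ℝ (Fin 2) → EuclideanSpace ℝ (Fin 2))
    (hf : ∀ x : EuclideanSpace ℝ (Fin 2),
      f x = (WithLp.equiv 2 (Fin 2 → ℝ)).symm
        ![-lam * x 0 + ρ₁ * x 0 ^ 2 + ρ₂ * x 0 * x 1,
          -lam * x 1 + ρ₁ * x 0 * x 1 + ρ₂ * x 1 ^ 2])
    (H : Set (EuclideanSpace ℝ (Fin 2)))
    (hH : H = {x : EuclideanSpace ℝ (Fin 2) | ρ₁ * x 0 + ρ₂ * x 1 < lam}) :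
    -- H is positively invariant
    (∀ x : ℝ → EuclideanSpace ℝ (Fin 2), IsSolOn f x → x 0 ∈ H → ∀ t ≥ 0, x t ∈ H) ∧
    -- and H is the domain of attraction of the origin
    H = domAttr f := by
  subst hH
  constructor
  · -- invariance
    intro x hx hx0 t ht
    have hform := sol_g_formula hf x hx t ht
    have h0 : 0 < lam - (ρ₁ * x 0 0 + ρ₂ * x 0 1) := sub_pos.2 hx0
    have : 0 < lam - (ρ₁ * x t 0 + ρ₂ * x t 1) := by
      rw [hform]; positivity
    exact sub_pos.1 this
  · apply Set.Subset.antisymm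
    · -- H ⊆ domAttr : explicit solution
      intro x0 hx0
      set u₀ : ℝ := ρ₁ * x0 0 + ρ₂ * x0 1 with hu0
      have hu0lt : u₀ < lam := hx0
      set d : ℝ → ℝ := fun t => (lam - u₀) * Real.exp (lam * t) + u₀ with hd_def
      have hdpos : ∀ t : ℝ, 0 ≤ t → lam ≤ d t := by
        intro t ht
        have h1 : (1:ℝ) ≤ Real.exp (lam * t) := Real.one_le_exp (by positivity)
        have h2 : lam - u₀ ≤ (lam - u₀) * Real.exp (lam * t) :=
          le_mul_of_one_le_right (by linarith) h1
        simp only [hd_def]; linarith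
      set φ : ℝ → ℝ := fun t => lam / d t with hφ_def
      refine ⟨fun t => φ t • x0, ?_, ?_, ?_⟩
      · -- initial condition
        have : d 0 = lam := by simp [hd_def]
        simp [hφ_def, this, hlam.ne']
      · -- solves the ODE
        intro t ht
        have hdt : d t ≠ 0 := by have := hdpos t ht; linarith
        have hd' : HasDerivAt d ((lam - u₀) * (Real.exp (lam * t) * lam)) t := by
          have he : HasDerivAt (fun s : ℝ => Real.exp (lam * s)) (Real.exp (lam * t) * lam) t := by
            have := (Real.hasDerivAt_exp (lam * t)).comp t
              ((hasDerivAt_id t).const_mul lam)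
            simpa [mul_comm, Function.comp_def] using this
          simpa [hd_def] using (he.const_mul (lam - u₀)).add_const u₀
        have hφ' : HasDerivAt φ
            ((0 * d t - lam * ((lam - u₀) * (Real.exp (lam * t) * lam))) / d t ^ 2) t :=
          (hasDerivAt_const t lam).div hd' hdt
        have hx' : HasDerivAt (fun s => φ s • x0)
            (((0 * d t - lam * ((lam - u₀) * (Real.exp (lam * t) * lam))) / d t ^ 2) • x0) t :=
          hφ'.smul_const x0
        have heq : ((0 * d t - lam * ((lam - u₀) * (Real.exp (lam * t) * lam))) / d t ^ 2) • x0
            = f (φ t • x0) := by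
          rw [hf]
          refine PiLp.ext (fun i => ?_)
          have hsmul : ∀ (c : ℝ) (j : Fin 2), (c • x0) j = c * x0 j := fun _ _ => rfl
          fin_cases i <;>
          · simp only [hsmul, WithLp.equiv_symm_apply, PiLp.toLp_apply, Fin.zero_eta, Fin.mk_one, Matrix.cons_val_zero,
              Matrix.cons_val_one, Matrix.head_cons]
            rw [hφ_def]
            have hd2 : d t ^ 2 ≠ 0 := pow_ne_zero _ hdt
            field_simp
            simp only [hd_def]
            ring
        rw [← heq] at *
        exact hx'.hasDerivWithinAt
      · -- tends to 0
        have hdtop : Tendsto d atTop atTop := by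
          apply tendsto_atTop_add_const_right
          apply Filter.Tendsto.const_mul_atTop (by linarith : (0:ℝ) < lam - u₀)
          exact Real.tendsto_exp_atTop.comp (Filter.tendsto_id.const_mul_atTop hlam)
        have hφ0 : Tendsto φ atTop (nhds 0) := Tendsto.div_atTop tendsto_const_nhds hdtop
        have := hφ0.smul_const x0
        simpa using this
    · -- domAttr ⊆ H
      rintro x0 ⟨x, hx0, hsol, htend⟩
      have hform := sol_g_formula hf x hsol
      by_contra hnot
      have hge : lam - (ρ₁ * x 0 0 + ρ₂ * x 0 1) ≤ 0 := by
        rw [hx0]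
        simpa using not_lt.1 hnot
      -- u t → 0 so eventually lam - u t > 0, but the formula forces it ≤ 0
      have hu_tend : Tendsto (fun t => ρ₁ * x t 0 + ρ₂ * x t 1) atTop (nhds 0) := by
        have h0 : Tendsto (fun t => x t 0) atTop (nhds 0) := by
          have := ((EuclideanSpace.proj (0 : Fin 2)).continuous.tendsto 0).comp htend
          simpa [Function.comp_def] using this
        have h1 : Tendsto (fun t => x t 1) atTop (nhds 0) := by
          have := ((EuclideanSpace.proj (1 : Fin 2)).continuous.tendsto 0).comp htend
          simpa [Function.comp_def] using this
        have := (h0.const_mul ρ₁).add (h1.const_mul ρ₂)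
        simpa using this
      have hev : ∀ᶠ t in atTop, lam - (ρ₁ * x t 0 + ρ₂ * x t 1) > lam / 2 := by
        have : ∀ᶠ t in atTop, ρ₁ * x t 0 + ρ₂ * x t 1 < lam / 2 :=
          hu_tend.eventually_lt_const (by linarith)
        filter_upwards [this] with t h using by linarith
      obtain ⟨T, hT⟩ := (hev.and (eventually_ge_atTop (0:ℝ))).exists
      have hformT := hform T hT.2
      have : lam - (ρ₁ * x T 0 + ρ₂ * x T 1) ≤ 0 := by
        rw [hformT]
        have := Real.exp_pos (∫ s in (0:ℝ)..T, (ρ₁ * x s 0 + ρ₂ * x s 1))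
        nlinarith
      linarith [hT.1]
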